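/- arXiv:1607.02392 — 5 statements merged into one kernel-verified Lean document; each statement's English description precedes it below -/
import Mathlib

section
/- Let g : ℂ → [0,∞) be measurable and let δ > 0 be such that c(λ) := ∫ 1_{|x|≤δ} g(x)^{−λ} dℓ_ℂ(x) < ∞ for every λ > 0. Then for every K > 0 and ε > 0 there exists n₀ ∈ ℕ such that for all n > n₀, ∫_{ℂ^{n+1}} 1{∏_{k=0}^n g(a_k) ≤ e^{−εn²}} · 1{max_{0≤k≤n} |a_k| < δ} dℓ_{ℂ^{n+1}}(a_0,…,a_n) ≤ e^{−Kn²}. -/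
open MeasureTheory Filter
open scoped ENNReal

lemma lintegral_pi_prod (μ : Measure ℂ) [SigmaFinite μ] (f : ℂ → ℝ≥0∞) (hf : Measurable f) :
    ∀ n : ℕ, ∫⁻ a : Fin n → ℂ, ∏ k, f (a k) ∂(Measure.pi fun _ => μ) = (∫⁻ x, f x ∂μ) ^ n := by
  intro n
  induction n with
  | zero =>
      rw [Measure.pi_of_empty]
      simp
  | succ n ih =>
      have hmp := measurePreserving_piFinSuccAbove (fun _ : Fin (n + 1) => μ) 0
      have hG : Measurable fun p : ℂ × (Fin n → ℂ) => f p.1 * ∏ j, f (p.2 j) := by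
        exact (hf.comp measurable_fst).mul
          (Finset.measurable_prod _ fun j _ => hf.comp ((measurable_pi_apply j).comp measurable_snd))
      calc ∫⁻ a : Fin (n + 1) → ℂ, ∏ k, f (a k) ∂(Measure.pi fun _ => μ)
          = ∫⁻ p, f p.1 * ∏ j, f (p.2 j) ∂(μ.prod (Measure.pi fun _ => μ)) := by
            rw [← hmp.lintegral_comp hG]
            refine lintegral_congr fun a => ?_
            simp [MeasurableEquiv.piFinSuccAbove, Fin.prod_univ_succ, Fin.tail]
        _ = (∫⁻ x, f x ∂μ) * (∫⁻ a : Fin n → ℂ, ∏ j, f (a j) ∂(Measure.pi fun _ => μ)) :=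
            lintegral_prod_mul hf.aemeasurable
              (Finset.measurable_prod _ fun j _ => hf.comp (measurable_pi_apply j)).aemeasurable
        _ = (∫⁻ x, f x ∂μ) ^ (n + 1) := by rw [ih, pow_succ, mul_comm]

/-- Technical lemma (complex case): if `∫_{|x|≤δ} g(x)^{−λ} dℓ_ℂ(x) < ∞` for every `λ > 0`,
then for every `K > 0` and `ε > 0`, for all large `n`, the Lebesgue measure of the set of
coefficient vectors `a ∈ ℂ^{n+1}` with `∏_k g(a_k) ≤ e^{−εn²}` and `max_k |a_k| < δ` is at
most `e^{−Kn²}`. -/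
theorem technical_lemma_complex (g : ℂ → ℝ) (hg_meas : Measurable g)
    (hg_nonneg : ∀ x, 0 ≤ g x) (δ : ℝ) (hδ : 0 < δ)
    (hc : ∀ l : ℝ, 0 < l →
      ∫⁻ x in {x : ℂ | ‖x‖ ≤ δ}, ENNReal.ofReal (g x) ^ (-l) < ⊤) :
    ∀ K > (0 : ℝ), ∀ ε > (0 : ℝ), ∃ n₀ : ℕ, ∀ n > n₀,
      volume {a : Fin (n + 1) → ℂ |
          (∏ k, g (a k)) ≤ Real.exp (-ε * (n : ℝ) ^ 2) ∧ ∀ k, ‖a k‖ < δ}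
        ≤ ENNReal.ofReal (Real.exp (-K * (n : ℝ) ^ 2)) := by
  intro K hK ε hε
  set l : ℝ := (K + 1) / ε with hl_def
  have hl_pos : 0 < l := div_pos (by linarith) hε
  have hlε : l * ε = K + 1 := div_mul_cancel₀ _ hε.ne'
  set B : Set ℂ := {x : ℂ | ‖x‖ ≤ δ} with hB_def
  have hB : MeasurableSet B := measurableSet_le measurable_norm measurable_const
  set f : ℂ → ℝ≥0∞ := fun x => ENNReal.ofReal (g x) ^ (-l) with hf_def
  have hf : Measurable f := (ENNReal.measurable_ofReal.comp hg_meas).pow_const (-l)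
  set C : ℝ≥0∞ := ∫⁻ x in B, f x with hC_def
  have hC : C < ⊤ := hc l hl_pos
  obtain ⟨M, hM1, hMC⟩ : ∃ M : ℝ, 1 ≤ M ∧ C ≤ ENNReal.ofReal M := by
    refine ⟨max 1 C.toReal, le_max_left _ _, ?_⟩
    calc C = ENNReal.ofReal C.toReal := (ENNReal.ofReal_toReal hC.ne).symm
      _ ≤ _ := ENNReal.ofReal_le_ofReal (le_max_right _ _)
  have hM0 : (0 : ℝ) < M := lt_of_lt_of_le one_pos hM1
  have hlogM : 0 ≤ Real.log M := Real.log_nonneg hM1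
  refine ⟨⌈Real.log M⌉₊ + 1, fun n hn => ?_⟩
  -- growth bound
  have hgrowth : ((n : ℝ) + 1) * Real.log M ≤ (n : ℝ) ^ 2 := by
    have h1 : Real.log M ≤ (⌈Real.log M⌉₊ : ℝ) := Nat.le_ceil _
    have h2 : (⌈Real.log M⌉₊ + 2 : ℝ) ≤ (n : ℝ) := by
      have : (⌈Real.log M⌉₊ + 2 : ℕ) ≤ n := hn
      exact_mod_cast this
    nlinarith [sq_nonneg ((n : ℝ) - 1)]
  set S : Set (Fin (n + 1) → ℂ) := {a : Fin (n + 1) → ℂ |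
      (∏ k, g (a k)) ≤ Real.exp (-ε * (n : ℝ) ^ 2) ∧ ∀ k, ‖a k‖ < δ} with hS_def
  have hprod_meas : Measurable fun a : Fin (n + 1) → ℂ => ∏ k, g (a k) :=
    Finset.measurable_prod _ fun k _ => hg_meas.comp (measurable_pi_apply k)
  have hS : MeasurableSet S := by
    rw [hS_def]
    simp only [Set.setOf_and]
    refine (measurableSet_le hprod_meas measurable_const).inter ?_
    rw [Set.setOf_forall]
    exact MeasurableSet.iInter fun k => measurableSet_lt
      (measurable_norm.comp (measurable_pi_apply k)) measurable_const
  set T : Set (Fin (n + 1) → ℂ) := Set.univ.pi (fun _ => B) with hT_def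
  have hT : MeasurableSet T := MeasurableSet.univ_pi fun _ => hB
  have hST : S ⊆ T := by
    rintro a ⟨-, ha⟩ k -
    exact le_of_lt (ha k)
  have hF : Measurable fun a : Fin (n + 1) → ℂ => ∏ k, f (a k) :=
    Finset.measurable_prod _ fun k _ => hf.comp (measurable_pi_apply k)
  set c₁ : ℝ≥0∞ := ENNReal.ofReal (Real.exp (-(l * (ε * (n : ℝ) ^ 2)))) with hc₁_def
  -- pointwise key bound on S
  have key : ∀ a ∈ S, (1 : ℝ≥0∞) ≤ c₁ * ∏ k, f (a k) := by
    rintro a ⟨haprod, -⟩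
    have h2 : ∏ k, ENNReal.ofReal (g (a k)) ≤ ENNReal.ofReal (Real.exp (-ε * (n : ℝ) ^ 2)) := by
      rw [← ENNReal.ofReal_prod_of_nonneg fun k _ => hg_nonneg _]
      exact ENNReal.ofReal_le_ofReal haprod
    have h3 : (ENNReal.ofReal (Real.exp (-ε * (n : ℝ) ^ 2))) ^ (-l)
        ≤ (∏ k, ENNReal.ofReal (g (a k))) ^ (-l) := by
      rw [ENNReal.rpow_neg, ENNReal.rpow_neg]
      exact ENNReal.inv_le_inv.mpr (ENNReal.rpow_le_rpow h2 hl_pos.le)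
    have h4 : (∏ k, ENNReal.ofReal (g (a k))) ^ (-l) = ∏ k, f (a k) := by
      simp only [hf_def]
      exact (ENNReal.prod_rpow_of_ne_top (fun k _ => ENNReal.ofReal_ne_top) (-l)).symm
    have e1 : (ENNReal.ofReal (Real.exp (-ε * (n : ℝ) ^ 2))) ^ (-l)
        = ENNReal.ofReal (Real.exp (l * (ε * (n : ℝ) ^ 2))) := by
      rw [ENNReal.ofReal_rpow_of_pos (Real.exp_pos _), ← Real.exp_mul]
      congr 1
      ring
    calc (1 : ℝ≥0∞) = ENNReal.ofReal (Real.exp (-(l * (ε * (n : ℝ) ^ 2)))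
          * Real.exp (l * (ε * (n : ℝ) ^ 2))) := by
          rw [← Real.exp_add, neg_add_cancel, Real.exp_zero, ENNReal.ofReal_one]
      _ = c₁ * ENNReal.ofReal (Real.exp (l * (ε * (n : ℝ) ^ 2))) :=
          ENNReal.ofReal_mul (Real.exp_pos _).le
      _ ≤ c₁ * ∏ k, f (a k) := by
          refine mul_le_mul_right ?_ c₁
          rw [← h4, ← e1]
          exact h3
  -- indicator identity
  set f' : ℂ → ℝ≥0∞ := B.indicator f with hf'_def
  have hf' : Measurable f' := hf.indicator hB
  have hTind : T.indicator (fun a => ∏ k, f (a k)) = fun a : Fin (n + 1) → ℂ => ∏ k, f' (a k) := by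
    funext a
    by_cases haT : a ∈ T
    · rw [Set.indicator_of_mem haT]
      exact Finset.prod_congr rfl fun k _ => (Set.indicator_of_mem (haT k (Set.mem_univ k)) f).symm
    · rw [Set.indicator_of_notMem haT]
      have hke : ∃ k, a k ∉ B := by
        by_contra hcon
        push_neg at hcon
        exact haT fun k _ => hcon k
      obtain ⟨k, hk⟩ := hke
      exact (Finset.prod_eq_zero (Finset.mem_univ k)
        (Set.indicator_of_notMem hk f)).symm
  have hint : ∫⁻ a in T, ∏ k, f (a k) = C ^ (n + 1) := by
    rw [← lintegral_indicator hT _, hTind]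
    rw [show (volume : Measure (Fin (n + 1) → ℂ)) = Measure.pi fun _ => volume from
      MeasureTheory.volume_pi, lintegral_pi_prod volume f' hf' (n + 1)]
    congr 1
    rw [hf'_def, lintegral_indicator hB _]
  -- main chain
  calc volume S = ∫⁻ _ in S, 1 := (setLIntegral_one S).symm
    _ ≤ ∫⁻ a in S, c₁ * ∏ k, f (a k) :=
        setLIntegral_mono (measurable_const.mul hF) key
    _ ≤ ∫⁻ a in T, c₁ * ∏ k, f (a k) := lintegral_mono_set hST
    _ = c₁ * ∫⁻ a in T, ∏ k, f (a k) := lintegral_const_mul c₁ hF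
    _ = c₁ * C ^ (n + 1) := by rw [hint]
    _ ≤ c₁ * (ENNReal.ofReal M) ^ (n + 1) := mul_le_mul_right (pow_le_pow_left' hMC _) c₁
    _ = ENNReal.ofReal (Real.exp (-(l * (ε * (n : ℝ) ^ 2))) * M ^ (n + 1)) := by
        rw [ENNReal.ofReal_mul (Real.exp_pos _).le, ENNReal.ofReal_pow hM0.le]
    _ ≤ ENNReal.ofReal (Real.exp (-K * (n : ℝ) ^ 2)) := by
        refine ENNReal.ofReal_le_ofReal ?_
        have hMpow : M ^ (n + 1) = Real.exp (((n : ℝ) + 1) * Real.log M) := by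
          rw [← Real.exp_log hM0]
          rw [← Real.exp_nat_mul]
          congr 1
          rw [Real.log_exp]
          push_cast
          ring
        rw [hMpow, ← Real.exp_add]
        apply Real.exp_le_exp.mpr
        have : l * (ε * (n : ℝ) ^ 2) = (K + 1) * (n : ℝ) ^ 2 := by
          rw [← mul_assoc, hlε]
        nlinarith
end

section
/- Let g : ℝ → [0,∞) be measurable and let δ > 0 be such that c(λ) := ∫ 1_{|x|≤δ} g(x)^{−λ} dℓ_ℝ(x) < ∞ for every λ > 0. Then for every K > 0 and ε > 0 there exists n₀ ∈ ℕ such that for all n > n₀, ∫_{ℝ^{n+1}} 1{∏_{k=0}^n g(a_k) ≤ e^{−εn²}} · 1{max_{0≤k≤n} |a_k| < δ} dℓ_{ℝ^{n+1}}(a_0,…,a_n) ≤ e^{−Kn²}. -/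
open MeasureTheory Filter
open scoped ENNReal

lemma lintegral_pi_prod_aux (n : ℕ) (f : ℝ → ℝ≥0∞) (hf : Measurable f) :
    ∫⁻ a : Fin n → ℝ, ∏ k, f (a k) = (∫⁻ x, f x) ^ n := by
  induction n with
  | zero => simp [volume_pi, lintegral_const, Measure.pi_empty_univ]
  | succ n ih =>
    have h := (measurePreserving_piFinSuccAbove (fun _ : Fin (n+1) => (volume : Measure ℝ)) 0).symm
    have hmeas : Measurable fun a : Fin (n+1) → ℝ => ∏ k, f (a k) :=
      Finset.measurable_prod _ fun k _ => hf.comp (measurable_pi_apply k)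
    rw [volume_pi, ← h.lintegral_comp hmeas]
    simp_rw [MeasurableEquiv.piFinSuccAbove_symm_apply, Fin.insertNthEquiv,
      Fin.prod_univ_succ, Fin.insertNth_zero]
    simp only [Fin.zero_succAbove, Function.comp_def, Fin.cons_zero, Fin.cons_succ, cast_eq,
      Equiv.coe_fn_mk]
    rw [lintegral_prod_mul (f := f) (g := fun b : Fin n → ℝ => ∏ k, f (b k)) hf.aemeasurable
      (Finset.measurable_prod _ fun k _ => hf.comp (measurable_pi_apply k)).aemeasurable]
    rw [← volume_pi, ih, pow_succ, mul_comm]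


set_option maxHeartbeats 1000000

/-- Technical lemma (real case): if `∫_{|x|≤δ} g(x)^{−λ} dℓ_ℝ(x) < ∞` for every `λ > 0`,
then for every `K > 0` and `ε > 0`, for all large `n`, the Lebesgue measure of the set of
coefficient vectors `a ∈ ℝ^{n+1}` with `∏_k g(a_k) ≤ e^{−εn²}` and `max_k |a_k| < δ` is at
most `e^{−Kn²}`. -/
theorem technical_lemma_real (g : ℝ → ℝ) (hg_meas : Measurable g)
    (hg_nonneg : ∀ x, 0 ≤ g x) (δ : ℝ) (hδ : 0 < δ)
    (hc : ∀ l : ℝ, 0 < l →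
      ∫⁻ x in {x : ℝ | |x| ≤ δ}, ENNReal.ofReal (g x) ^ (-l) < ⊤) :
    ∀ K > (0 : ℝ), ∀ ε > (0 : ℝ), ∃ n₀ : ℕ, ∀ n > n₀,
      volume {a : Fin (n + 1) → ℝ |
          (∏ k, g (a k)) ≤ Real.exp (-ε * (n : ℝ) ^ 2) ∧ ∀ k, |a k| < δ}
        ≤ ENNReal.ofReal (Real.exp (-K * (n : ℝ) ^ 2)) := by
  intro K hK ε hε
  set l : ℝ := (K + 1) / ε with hl_def
  have hl : 0 < l := div_pos (by linarith) hε
  have hlε : l * ε = K + 1 := div_mul_cancel₀ _ hε.ne'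
  have hmeasδ : MeasurableSet {x : ℝ | |x| ≤ δ} :=
    measurableSet_le (measurable_abs) measurable_const
  set F : ℝ → ℝ≥0∞ :=
    fun x => Set.indicator {x : ℝ | |x| ≤ δ} (fun x => ENNReal.ofReal (g x) ^ (-l)) x with hF
  have hFmeas : Measurable F :=
    Measurable.indicator ((hg_meas.ennreal_ofReal).pow_const (-l)) hmeasδ
  have hc' : ∫⁻ x, F x = ∫⁻ x in {x : ℝ | |x| ≤ δ}, ENNReal.ofReal (g x) ^ (-l) :=
    lintegral_indicator hmeasδ _
  set c : ℝ≥0∞ := ∫⁻ x, F x with hc_def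
  have hcfin : c ≠ ⊤ := by rw [hc']; exact (hc l hl).ne
  -- antitonicity of rpow with negative exponent
  have anti : ∀ x y : ℝ≥0∞, x ≤ y → y ^ (-l) ≤ x ^ (-l) := by
    intro x y hxy
    rw [ENNReal.rpow_neg, ENNReal.rpow_neg]
    exact ENNReal.inv_le_inv' (ENNReal.rpow_le_rpow hxy hl.le)
  set C : ℝ := c.toReal with hC_def
  have hC0 : 0 ≤ C := ENNReal.toReal_nonneg
  set L : ℝ := Real.log (C + 1) with hL_def
  have hL0 : 0 ≤ L := Real.log_nonneg (by linarith)
  refine ⟨⌈2 * L⌉₊ + 1, fun n hn => ?_⟩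
  have hn1 : (1 : ℝ) ≤ (n : ℝ) := by
    have : 1 ≤ n := by omega
    exact_mod_cast this
  have h2L : 2 * L ≤ (n : ℝ) := by
    have h : (⌈2 * L⌉₊ : ℝ) ≤ (n : ℝ) := by exact_mod_cast (by omega : ⌈2 * L⌉₊ ≤ n)
    linarith [Nat.le_ceil (2 * L)]
  set S : Set (Fin (n + 1) → ℝ) := {a : Fin (n + 1) → ℝ |
      (∏ k, g (a k)) ≤ Real.exp (-ε * (n : ℝ) ^ 2) ∧ ∀ k, |a k| < δ} with hS_def
  -- pointwise bound on S
  have key : ∀ a ∈ S, ENNReal.ofReal (Real.exp (l * ε * (n:ℝ) ^ 2)) ≤ ∏ k, F (a k) := by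
    rintro a ⟨h1, h2⟩
    have hFeq : ∀ k, F (a k) = ENNReal.ofReal (g (a k)) ^ (-l) := fun k =>
      Set.indicator_of_mem (show a k ∈ {x : ℝ | |x| ≤ δ} from le_of_lt (h2 k)) _
    calc ENNReal.ofReal (Real.exp (l * ε * (n:ℝ) ^ 2))
        = (ENNReal.ofReal (Real.exp (-ε * (n:ℝ) ^ 2))) ^ (-l) := by
          rw [ENNReal.ofReal_rpow_of_pos (Real.exp_pos _), ← Real.exp_mul]
          ring_nf
      _ ≤ (ENNReal.ofReal (∏ k, g (a k))) ^ (-l) :=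
          anti _ _ (ENNReal.ofReal_le_ofReal h1)
      _ = (∏ k, ENNReal.ofReal (g (a k))) ^ (-l) := by
          rw [ENNReal.ofReal_prod_of_nonneg (fun i _ => hg_nonneg _)]
      _ = ∏ k, ENNReal.ofReal (g (a k)) ^ (-l) :=
          (ENNReal.prod_rpow_of_ne_top (fun i _ => ENNReal.ofReal_ne_top) _).symm
      _ = ∏ k, F (a k) := by simp_rw [hFeq]
  have hprodmeas : Measurable fun a : Fin (n+1) → ℝ => ∏ k, F (a k) :=
    Finset.measurable_prod _ fun k _ => hFmeas.comp (measurable_pi_apply k)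
  -- Chernoff bound
  have main : volume S ≤ ENNReal.ofReal (Real.exp (-(l * ε) * (n:ℝ) ^ 2)) * c ^ (n + 1) := by
    calc volume S = ∫⁻ _ in S, 1 := (setLIntegral_one _).symm
      _ ≤ ∫⁻ a in S, ENNReal.ofReal (Real.exp (-(l * ε) * (n:ℝ) ^ 2)) * ∏ k, F (a k) := by
          refine setLIntegral_mono (measurable_const.mul hprodmeas) (fun a ha => ?_)
          calc (1 : ℝ≥0∞)
              = ENNReal.ofReal (Real.exp (-(l * ε) * (n:ℝ) ^ 2)) *
                ENNReal.ofReal (Real.exp (l * ε * (n:ℝ) ^ 2)) := by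
                rw [← ENNReal.ofReal_mul (Real.exp_nonneg _), ← Real.exp_add]
                norm_num
            _ ≤ _ := mul_le_mul_right (key a ha) _
      _ ≤ ∫⁻ a : Fin (n+1) → ℝ, ENNReal.ofReal (Real.exp (-(l * ε) * (n:ℝ) ^ 2)) * ∏ k, F (a k) :=
          setLIntegral_le_lintegral _ _
      _ = ENNReal.ofReal (Real.exp (-(l * ε) * (n:ℝ) ^ 2)) * ∫⁻ a : Fin (n+1) → ℝ, ∏ k, F (a k) :=
          lintegral_const_mul _ hprodmeas
      _ = _ := by rw [lintegral_pi_prod_aux _ _ hFmeas]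
  refine main.trans ?_
  -- bound c ^ (n+1)
  have hcbound : c ^ (n + 1) ≤ ENNReal.ofReal (Real.exp (((n:ℝ) + 1) * L)) := by
    have h1 : c ≤ ENNReal.ofReal (C + 1) := by
      rw [← ENNReal.ofReal_toReal hcfin]
      exact ENNReal.ofReal_le_ofReal (by linarith)
    calc c ^ (n + 1) ≤ (ENNReal.ofReal (C + 1)) ^ (n + 1) := pow_le_pow_left' h1 _
      _ = ENNReal.ofReal ((C + 1) ^ (n + 1)) := (ENNReal.ofReal_pow (by linarith) _).symm
      _ = ENNReal.ofReal (Real.exp (((n:ℝ) + 1) * L)) := by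
          rw [← Real.exp_log (x := C + 1) (by linarith), ← Real.exp_nat_mul]
          norm_num [Real.exp_log, mul_comm]
          rfl
  calc ENNReal.ofReal (Real.exp (-(l * ε) * (n:ℝ) ^ 2)) * c ^ (n + 1)
      ≤ ENNReal.ofReal (Real.exp (-(l * ε) * (n:ℝ) ^ 2)) *
        ENNReal.ofReal (Real.exp (((n:ℝ) + 1) * L)) := mul_le_mul_right hcbound _
    _ = ENNReal.ofReal (Real.exp (-(l * ε) * (n:ℝ) ^ 2 + ((n:ℝ) + 1) * L)) := by
        rw [← ENNReal.ofReal_mul (Real.exp_nonneg _), ← Real.exp_add]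
    _ ≤ ENNReal.ofReal (Real.exp (-K * (n : ℝ) ^ 2)) := by
        refine ENNReal.ofReal_le_ofReal (Real.exp_le_exp.mpr ?_)
        rw [hlε]
        nlinarith [mul_nonneg hL0 (by linarith : (0:ℝ) ≤ (n:ℝ) - 1)]
end

section
/- Let ρ > 0, r > 0, R > 0 and let g : ℂ → [0,∞) be measurable with g(x) ≤ exp(−r|x|^ρ + R) for all x ∈ ℂ. Then for every n ≥ 1 and every z = (z_1,…,z_n) ∈ ℂⁿ, ∫_ℂ (∏_{i<j} |z_i − z_j|²) |a|^{2n} ∏_{k=0}^n g(a·ã_k(z)) dℓ_ℂ(a) ≤ e^{(n+1)R} · (∏_{i<j} |z_i − z_j|² / ‖ã(z)‖_ρ^{2n+2}) · ∫_ℂ |u|^{2n} e^{−r|u|^ρ} dℓ_ℂ(u). -/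
open MeasureTheory Filter Polynomial
open scoped ENNReal

noncomputable section

/-- `ã(z)`: the coefficient vector of the monic polynomial `∏ (X − z_i)`. -/
def atil (n : ℕ) (z : Fin n → ℂ) : Fin (n + 1) → ℂ :=
  fun k => (∏ i, (Polynomial.X - Polynomial.C (z i))).coeff (k : ℕ)

/-- The squared Vandermonde factor `∏_{i<j} |z_i − z_j|²`. -/
def vand (n : ℕ) (z : Fin n → ℂ) : ℝ :=
  ∏ p ∈ Finset.univ.filter (fun p : Fin n × Fin n => p.1 < p.2),
    ‖z p.1 - z p.2‖ ^ 2

/-- Upper bound on the density of the zeros in terms of `‖ã(z)‖_ρ`. -/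
theorem density_upper_bound_rho (ρ r R : ℝ) (hρ : 0 < ρ) (hr : 0 < r) (hR : 0 < R)
    (g : ℂ → ℝ) (hg_meas : Measurable g) (hg_nonneg : ∀ x, 0 ≤ g x)
    (htail : ∀ x : ℂ, g x ≤ Real.exp (-r * ‖x‖ ^ ρ + R))
    (n : ℕ) (hn : 1 ≤ n) (z : Fin n → ℂ) :
    (∫⁻ a : ℂ, ENNReal.ofReal
        (vand n z * ‖a‖ ^ (2 * n) * ∏ k, g (a * atil n z k)))
      ≤ ENNReal.ofReal (Real.exp ((n + 1 : ℝ) * R) *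
          (vand n z /
            ((∑ k, ‖atil n z k‖ ^ ρ) ^ ((1 : ℝ) / ρ)) ^ (2 * n + 2))) *
        ∫⁻ u : ℂ, ENNReal.ofReal
          (‖u‖ ^ (2 * n) * Real.exp (-r * ‖u‖ ^ ρ)) := by
  classical
  set S : ℝ := ∑ k, ‖atil n z k‖ ^ ρ with hS
  -- the leading coefficient is 1
  have hlast : atil n z (Fin.last n) = 1 := by
    have hmonic : (∏ i, (X - C (z i))).Monic :=
      monic_prod_of_monic _ _ fun i _ => monic_X_sub_C (z i)
    have hdeg : (∏ i, (X - C (z i))).natDegree = n := by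
      rw [natDegree_prod _ _ fun i _ => X_sub_C_ne_zero (z i)]
      simp
    have := hmonic.coeff_natDegree
    rw [hdeg] at this
    simpa [atil] using this
  have hS1 : (1 : ℝ) ≤ S := by
    calc (1 : ℝ) = ‖atil n z (Fin.last n)‖ ^ ρ := by simp [hlast]
      _ ≤ S := Finset.single_le_sum
          (fun k _ => Real.rpow_nonneg (norm_nonneg _) ρ) (Finset.mem_univ _)
  have hSpos : 0 < S := lt_of_lt_of_le one_pos hS1
  set N : ℝ := S ^ ((1 : ℝ) / ρ) with hN
  have hNpos : 0 < N := Real.rpow_pos_of_pos hSpos _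
  have hNrho : N ^ ρ = S := by
    rw [hN, ← Real.rpow_mul hSpos.le, one_div_mul_cancel hρ.ne', Real.rpow_one]
  have hvand : 0 ≤ vand n z :=
    Finset.prod_nonneg fun p _ => pow_nonneg (norm_nonneg _) 2
  set f : ℂ → ℝ≥0∞ := fun u =>
    ENNReal.ofReal (‖u‖ ^ (2 * n) * Real.exp (-r * ‖u‖ ^ ρ)) with hf
  set Cc : ℝ := vand n z * Real.exp ((n + 1 : ℝ) * R) / N ^ (2 * n) with hCc
  have hCcnn : 0 ≤ Cc := by positivity
  have hfmeas : Measurable f := by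
    apply Measurable.ennreal_ofReal
    have h : Measurable fun u : ℂ => ‖u‖ := continuous_norm.measurable
    have h2 : Measurable fun u : ℂ => ‖u‖ ^ ρ :=
      ((Real.continuous_rpow_const hρ.le).comp continuous_norm).measurable
    exact (h.pow_const _).mul ((h2.const_mul _).exp)
  -- pointwise bound
  have key : ∀ a : ℂ,
      ENNReal.ofReal (vand n z * ‖a‖ ^ (2 * n) * ∏ k, g (a * atil n z k))
      ≤ ENNReal.ofReal Cc * f (N • a) := by
    intro a
    have habs : ‖N • a‖ = N * ‖a‖ := by
      rw [norm_smul, Real.norm_eq_abs, abs_of_pos hNpos]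
    have hprod : (∏ k, g (a * atil n z k))
        ≤ Real.exp ((n + 1 : ℝ) * R) * Real.exp (-(r * (S * ‖a‖ ^ ρ))) := by
      have h1 : (∏ k, g (a * atil n z k))
          ≤ ∏ k : Fin (n+1), Real.exp (-r * ‖a * atil n z k‖ ^ ρ + R) :=
        Finset.prod_le_prod (fun k _ => hg_nonneg _) (fun k _ => htail _)
      refine h1.trans_eq ?_
      rw [← Real.exp_sum, ← Real.exp_add]
      congr 1
      have hterm : ∀ k : Fin (n + 1), -r * ‖a * atil n z k‖ ^ ρ + R
          = (-r * ‖a‖ ^ ρ) * ‖atil n z k‖ ^ ρ + R := by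
        intro k
        rw [norm_mul, Real.mul_rpow (norm_nonneg _) (norm_nonneg _)]
        ring
      rw [Finset.sum_congr rfl fun k _ => hterm k, Finset.sum_add_distrib,
        ← Finset.mul_sum, Finset.sum_const, Finset.card_univ, Fintype.card_fin, ← hS,
        nsmul_eq_mul]
      push_cast
      ring
    rw [← ENNReal.ofReal_mul hCcnn]
    apply ENNReal.ofReal_le_ofReal
    have hrhs : Cc * (‖N • a‖ ^ (2 * n) *
        Real.exp (-r * ‖N • a‖ ^ ρ))
        = vand n z * ‖a‖ ^ (2 * n) *
          (Real.exp ((n + 1 : ℝ) * R) * Real.exp (-(r * (S * ‖a‖ ^ ρ)))) := by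
      rw [habs, mul_pow, Real.mul_rpow hNpos.le (norm_nonneg _), hNrho, hCc]
      rw [div_mul_eq_mul_div, mul_comm]
      field_simp
    rw [hrhs]
    have h2 : (0:ℝ) ≤ vand n z * ‖a‖ ^ (2 * n) := by positivity
    exact mul_le_mul_of_nonneg_left hprod h2
  -- change of variables
  have hmap : ∫⁻ a : ℂ, f (N • a) = ENNReal.ofReal ((N ^ 2)⁻¹) * ∫⁻ u, f u := by
    rw [← lintegral_map hfmeas (measurable_const_smul N),
      MeasureTheory.Measure.map_addHaar_smul volume hNpos.ne', lintegral_smul_measure,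
      Complex.finrank_real_complex, abs_of_nonneg (by positivity)]
    rfl
  calc (∫⁻ a : ℂ, ENNReal.ofReal
        (vand n z * ‖a‖ ^ (2 * n) * ∏ k, g (a * atil n z k)))
      ≤ ∫⁻ a : ℂ, ENNReal.ofReal Cc * f (N • a) := lintegral_mono key
    _ = ENNReal.ofReal Cc * ∫⁻ a : ℂ, f (N • a) :=
        lintegral_const_mul _ (hfmeas.comp (measurable_const_smul N))
    _ = ENNReal.ofReal Cc * (ENNReal.ofReal ((N ^ 2)⁻¹) * ∫⁻ u, f u) := by rw [hmap]
    _ = ENNReal.ofReal (Real.exp ((n + 1 : ℝ) * R) * (vand n z / N ^ (2 * n + 2))) *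
          ∫⁻ u, f u := by
        rw [← mul_assoc, ← ENNReal.ofReal_mul hCcnn]
        congr 2
        rw [hCc, pow_add]
        field_simp
end
end

section
/- Let ρ > 0, r > 0, R > 0 and let g : ℂ → [0,∞) be measurable with g(x) ≤ exp(−r|x|^ρ + R) for all x ∈ ℂ. Set γ_n = min(1, (n+1)^{1/ρ − 1/2}). Then for every n ≥ 1 and every z = (z_1,…,z_n) ∈ ℂⁿ, ∫_ℂ (∏_{i<j} |z_i − z_j|²) |a|^{2n} ∏_{k=0}^n g(a·ã_k(z)) dℓ_ℂ(a) ≤ e^{(n+1)R} · γ_n^{−(2n+2)} · (∏_{i<j} |z_i − z_j|² / ‖ã(z)‖_2^{2n+2}) · ∫_ℂ |u|^{2n} e^{−r|u|^ρ} dℓ_ℂ(u). -/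
open MeasureTheory Filter Polynomial
open scoped ENNReal NNReal

noncomputable section

lemma nnreal_sum_rpow {ι : Type*} (s : Finset ι) (f : ι → ℝ≥0) {t : ℝ} (ht : 0 < t)
    (ht1 : t ≤ 1) : (∑ i ∈ s, f i) ^ t ≤ ∑ i ∈ s, f i ^ t := by
  induction s using Finset.cons_induction with
  | empty => simp [NNReal.zero_rpow ht.ne']
  | cons a s ha ih =>
      rw [Finset.sum_cons, Finset.sum_cons]
      calc (f a + ∑ i ∈ s, f i) ^ t ≤ f a ^ t + (∑ i ∈ s, f i) ^ t :=
            NNReal.rpow_add_le_add_rpow _ _ ht.le ht1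
        _ ≤ _ := add_le_add_right ih _

lemma real_sum_rpow {ι : Type*} (s : Finset ι) (x : ι → ℝ) (hx : ∀ k, 0 ≤ x k) {t : ℝ}
    (ht : 0 < t) (ht1 : t ≤ 1) : (∑ k ∈ s, x k) ^ t ≤ ∑ k ∈ s, x k ^ t := by
  have h := nnreal_sum_rpow s (fun k => Real.toNNReal (x k)) ht ht1
  have h2 := NNReal.coe_le_coe.2 h
  rw [NNReal.coe_rpow, NNReal.coe_sum, NNReal.coe_sum] at h2
  have hx' : ∀ k, ((x k).toNNReal : ℝ) = x k := fun k => Real.coe_toNNReal _ (hx k)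
  simpa [NNReal.coe_rpow, hx'] using h2

/-- Norm comparison `‖x‖_ρ^ρ ≥ γ^ρ ‖x‖₂^ρ`. -/
lemma norm_comp (ρ : ℝ) (hρ : 0 < ρ) (n : ℕ) (x : Fin (n + 1) → ℝ) (hx : ∀ k, 0 ≤ x k) :
    (min 1 (((n : ℝ) + 1) ^ ((1 : ℝ) / ρ - 1 / 2))) ^ ρ * (∑ k, x k ^ 2) ^ (ρ / 2)
      ≤ ∑ k, x k ^ ρ := by
  have hbase : (1 : ℝ) ≤ (n : ℝ) + 1 := by
    have := Nat.cast_nonneg (α := ℝ) n; linarith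
  have hpos : (0 : ℝ) < (n : ℝ) + 1 := by linarith
  have hxsq : ∀ k, (0:ℝ) ≤ x k ^ 2 := fun k => sq_nonneg _
  have hkey : ∀ k, (x k ^ 2 : ℝ) ^ (ρ / 2) = x k ^ ρ := by
    intro k
    rw [← Real.rpow_natCast (x k) 2, ← Real.rpow_mul (hx k)]
    congr 1
    push_cast; ring
  rcases le_or_gt ρ 2 with h2 | h2
  · have hmin : min 1 (((n : ℝ) + 1) ^ ((1 : ℝ) / ρ - 1 / 2)) = 1 := by
      refine min_eq_left (Real.one_le_rpow hbase ?_)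
      have : (1:ℝ)/2 ≤ 1/ρ := one_div_le_one_div_of_le hρ h2
      linarith
    rw [hmin, Real.one_rpow, one_mul]
    calc (∑ k, x k ^ 2) ^ (ρ / 2) ≤ ∑ k, (x k ^ 2 : ℝ) ^ (ρ / 2) :=
          real_sum_rpow Finset.univ _ hxsq (by positivity) (by linarith)
      _ = ∑ k, x k ^ ρ := by simp_rw [hkey]
  · have hmin : min 1 (((n : ℝ) + 1) ^ ((1 : ℝ) / ρ - 1 / 2))
        = ((n : ℝ) + 1) ^ ((1 : ℝ) / ρ - 1 / 2) := by
      refine min_eq_right (Real.rpow_le_one_of_one_le_of_nonpos hbase ?_)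
      have : (1:ℝ)/ρ ≤ 1/2 := one_div_le_one_div_of_le two_pos h2.le
      linarith
    have hγρ : ((((n : ℝ) + 1) ^ ((1 : ℝ) / ρ - 1 / 2)) : ℝ) ^ ρ
        = ((n:ℝ)+1) ^ ((1:ℝ) - ρ/2) := by
      rw [← Real.rpow_mul hpos.le]
      congr 1
      field_simp
    rw [hmin, hγρ]
    -- weighted power mean inequality
    have hw := Real.rpow_arith_mean_le_arith_mean_rpow Finset.univ
      (fun _ : Fin (n+1) => ((n:ℝ)+1)⁻¹) (fun k => x k ^ 2)
      (fun i _ => by positivity)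
      (by
        rw [Finset.sum_const, Finset.card_univ, Fintype.card_fin, nsmul_eq_mul]
        push_cast
        field_simp)
      (fun i _ => hxsq i) (by linarith : (1:ℝ) ≤ ρ/2)
    rw [← Finset.mul_sum, ← Finset.mul_sum] at hw
    simp_rw [hkey] at hw
    rw [Real.mul_rpow (by positivity) (Finset.sum_nonneg fun i _ => hxsq i),
      Real.inv_rpow hpos.le] at hw
    -- hw : ((n+1)^(ρ/2))⁻¹ * T^(ρ/2) ≤ (n+1)⁻¹ * S
    have e2 : ((n:ℝ)+1) ^ ((1:ℝ) - ρ/2) = ((n:ℝ)+1) * (((n:ℝ)+1) ^ (ρ/2))⁻¹ := by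
      rw [Real.rpow_sub hpos, Real.rpow_one, div_eq_mul_inv]
    rw [e2, mul_assoc]
    have := mul_le_mul_of_nonneg_left hw hpos.le
    calc ((n:ℝ)+1) * ((((n:ℝ)+1) ^ (ρ/2))⁻¹ * (∑ k, x k ^ 2) ^ (ρ/2))
        ≤ ((n:ℝ)+1) * (((n:ℝ)+1)⁻¹ * ∑ k, x k ^ ρ) := this
      _ = ∑ k, x k ^ ρ := by field_simp

/-- the top coefficient is 1 -/
lemma atil_last (n : ℕ) (z : Fin n → ℂ) : atil n z (Fin.last n) = 1 := by
  unfold atil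
  have hm : (∏ i, (Polynomial.X - Polynomial.C (z i))).Monic :=
    monic_prod_of_monic _ _ fun i _ => monic_X_sub_C (z i)
  have hd : (∏ i, (Polynomial.X - Polynomial.C (z i))).natDegree = n := by
    rw [natDegree_prod_of_monic _ _ fun i _ => monic_X_sub_C (z i)]
    simp [natDegree_X_sub_C]
  have := hm.coeff_natDegree
  rw [hd] at this
  simpa using this

/-- auxiliary density function -/
def Gfun (ρ r : ℝ) (n : ℕ) : ℂ → ℝ≥0∞ :=
  fun u => ENNReal.ofReal (‖u‖ ^ (2 * n) * Real.exp (-r * ‖u‖ ^ ρ))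

lemma Gfun_meas (ρ r : ℝ) (hρ : 0 < ρ) (n : ℕ) : Measurable (Gfun ρ r n) := by
  apply ENNReal.measurable_ofReal.comp
  apply Measurable.mul
  · exact (continuous_norm.measurable).pow_const _
  · apply Real.measurable_exp.comp
    apply Measurable.const_mul
    exact (continuous_norm.rpow_const (fun x => Or.inr hρ.le)).measurable

/-- Upper bound on the density of the zeros in terms of the Euclidean norm `‖ã(z)‖₂`,
with the comparison factor `γ_n = min(1, (n+1)^{1/ρ − 1/2})`. -/
theorem density_upper_bound_euclidean (ρ r R : ℝ) (hρ : 0 < ρ) (hr : 0 < r) (hR : 0 < R)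
    (g : ℂ → ℝ) (hg_meas : Measurable g) (hg_nonneg : ∀ x, 0 ≤ g x)
    (htail : ∀ x : ℂ, g x ≤ Real.exp (-r * ‖x‖ ^ ρ + R))
    (n : ℕ) (hn : 1 ≤ n) (z : Fin n → ℂ) :
    (∫⁻ a : ℂ, ENNReal.ofReal
        (vand n z * ‖a‖ ^ (2 * n) * ∏ k, g (a * atil n z k)))
      ≤ ENNReal.ofReal (Real.exp ((n + 1 : ℝ) * R) *
          ((min 1 (((n : ℝ) + 1) ^ ((1 : ℝ) / ρ - 1 / 2))) ^ (2 * n + 2))⁻¹ *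
          (vand n z /
            ((∑ k, ‖atil n z k‖ ^ 2) ^ ((1 : ℝ) / 2)) ^ (2 * n + 2))) *
        ∫⁻ u : ℂ, ENNReal.ofReal
          (‖u‖ ^ (2 * n) * Real.exp (-r * ‖u‖ ^ ρ)) := by
  set γ : ℝ := min 1 (((n : ℝ) + 1) ^ ((1 : ℝ) / ρ - 1 / 2)) with hγdef
  set T : ℝ := ∑ k, ‖atil n z k‖ ^ 2 with hTdef
  set N : ℝ := T ^ ((1:ℝ)/2) with hNdef
  set c : ℝ := γ * N with hcdef
  clear_value γ T N c
  have hγ0 : 0 < γ := by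
    rw [hγdef]; exact lt_min one_pos (Real.rpow_pos_of_pos (by positivity) _)
  have hT1 : (1:ℝ) ≤ T := by
    rw [hTdef]
    have h := Finset.single_le_sum (f := fun k => ‖atil n z k‖ ^ 2)
      (fun k _ => sq_nonneg _) (Finset.mem_univ (Fin.last n))
    simpa [atil_last] using h
  have hT0 : (0:ℝ) ≤ T := by linarith
  have hN1 : (1:ℝ) ≤ N := by
    rw [hNdef]; exact Real.one_le_rpow hT1 (by norm_num)
  have hN0 : (0:ℝ) < N := by linarith
  have hc0 : 0 < c := by rw [hcdef]; exact mul_pos hγ0 hN0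
  have hV0 : 0 ≤ vand n z := Finset.prod_nonneg fun p _ => sq_nonneg _
  have hnorm : γ ^ ρ * T ^ (ρ/2) ≤ ∑ k, ‖atil n z k‖ ^ ρ := by
    rw [hγdef, hTdef]
    exact norm_comp ρ hρ n (fun k => ‖atil n z k‖) (fun k => norm_nonneg _)
  have hcρ : c ^ ρ = γ ^ ρ * T ^ (ρ / 2) := by
    rw [hcdef, Real.mul_rpow hγ0.le hN0.le, hNdef, ← Real.rpow_mul hT0,
      show (1:ℝ)/2*ρ = ρ/2 by ring]
  -- pointwise bound on the product
  have hprod : ∀ a : ℂ, (∏ k, g (a * atil n z k))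
      ≤ Real.exp ((n+1 : ℝ) * R) * Real.exp (-r * (c * ‖a‖) ^ ρ) := by
    intro a
    have h1 : (∏ k, g (a * atil n z k))
        ≤ ∏ k : Fin (n+1), Real.exp (-r * ‖a * atil n z k‖ ^ ρ + R) :=
      Finset.prod_le_prod (fun k _ => hg_nonneg _) (fun k _ => htail _)
    rw [← Real.exp_sum] at h1
    refine h1.trans ?_
    rw [← Real.exp_add]
    apply Real.exp_le_exp.2
    have habs : ∀ k : Fin (n+1), -r * ‖a * atil n z k‖ ^ ρ + R
        = -r * ‖a‖ ^ ρ * ‖atil n z k‖ ^ ρ + R := by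
      intro k
      rw [norm_mul, Real.mul_rpow (norm_nonneg _) (norm_nonneg _)]
      ring
    have hsum : ∑ k : Fin (n+1), (-r * ‖a * atil n z k‖ ^ ρ + R)
        = -r * ‖a‖ ^ ρ * (∑ k, ‖atil n z k‖ ^ ρ) + ((n:ℝ)+1) * R := by
      simp_rw [habs]
      rw [Finset.sum_add_distrib, ← Finset.mul_sum, Finset.sum_const, Finset.card_univ,
        Fintype.card_fin, nsmul_eq_mul]
      push_cast; ring
    rw [hsum]
    have h4 : r * (‖a‖ ^ ρ * (γ ^ ρ * T ^ (ρ/2)))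
        ≤ r * (‖a‖ ^ ρ * (∑ k, ‖atil n z k‖ ^ ρ)) := by
      apply mul_le_mul_of_nonneg_left _ hr.le
      exact mul_le_mul_of_nonneg_left hnorm (Real.rpow_nonneg (norm_nonneg _) _)
    have h3 : (c * ‖a‖) ^ ρ = ‖a‖ ^ ρ * c ^ ρ := by
      rw [Real.mul_rpow hc0.le (norm_nonneg _)]; ring
    rw [h3, hcρ]
    linarith
  set K1 : ℝ := vand n z * Real.exp ((n+1:ℝ)*R) * (c ^ (2*n))⁻¹ with hK1def
  clear_value K1
  have hK1 : 0 ≤ K1 := by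
    rw [hK1def]
    exact mul_nonneg (mul_nonneg hV0 (Real.exp_nonneg _))
      (inv_nonneg.2 (pow_nonneg hc0.le _))
  have hpt : ∀ a : ℂ,
      ENNReal.ofReal (vand n z * ‖a‖ ^ (2*n) * ∏ k, g (a * atil n z k))
        ≤ ENNReal.ofReal K1 * Gfun ρ r n (c • a) := by
    intro a
    have habs : ‖c • a‖ = c * ‖a‖ := by
      rw [norm_smul, Real.norm_of_nonneg hc0.le]
    have h5 : vand n z * ‖a‖ ^ (2*n) * ∏ k, g (a * atil n z k)
        ≤ vand n z * ‖a‖ ^ (2*n)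
          * (Real.exp ((n+1:ℝ)*R) * Real.exp (-r * (c * ‖a‖) ^ ρ)) :=
      mul_le_mul_of_nonneg_left (hprod a)
        (mul_nonneg hV0 (pow_nonneg (norm_nonneg a) _))
    refine (ENNReal.ofReal_le_ofReal h5).trans (le_of_eq ?_)
    unfold Gfun
    rw [← ENNReal.ofReal_mul hK1]
    congr 1
    rw [habs, hK1def, mul_pow]
    have hcn : (c:ℝ) ^ (2*n) ≠ 0 := pow_ne_zero _ hc0.ne'
    field_simp
  have hchange : ∫⁻ a : ℂ, Gfun ρ r n (c • a)
      = ENNReal.ofReal ((c^2)⁻¹) * ∫⁻ u : ℂ, Gfun ρ r n u := by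
    have hmap := Measure.map_addHaar_smul (volume : Measure ℂ) hc0.ne'
    have h6 : ∫⁻ a : ℂ, Gfun ρ r n (c • a)
        = ∫⁻ u : ℂ, Gfun ρ r n u ∂(Measure.map (c • ·) volume) :=
      (lintegral_map (Gfun_meas ρ r hρ n) (measurable_id.const_smul c)).symm
    rw [h6, hmap, lintegral_smul_measure, Complex.finrank_real_complex,
      abs_of_pos (inv_pos.2 (pow_pos hc0 2)), smul_eq_mul]
  calc (∫⁻ a : ℂ, ENNReal.ofReal
        (vand n z * ‖a‖ ^ (2 * n) * ∏ k, g (a * atil n z k)))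
      ≤ ∫⁻ a : ℂ, ENNReal.ofReal K1 * Gfun ρ r n (c • a) := lintegral_mono hpt
    _ = ENNReal.ofReal K1 * ∫⁻ a : ℂ, Gfun ρ r n (c • a) :=
        lintegral_const_mul' _ _ ENNReal.ofReal_ne_top
    _ = ENNReal.ofReal K1 * (ENNReal.ofReal ((c^2)⁻¹) * ∫⁻ u : ℂ, Gfun ρ r n u) := by
        rw [hchange]
    _ = ENNReal.ofReal (Real.exp ((n + 1 : ℝ) * R) * ((γ : ℝ) ^ (2 * n + 2))⁻¹ *
          (vand n z / (N:ℝ) ^ (2 * n + 2))) * ∫⁻ u : ℂ, Gfun ρ r n u := by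
        rw [← mul_assoc, ← ENNReal.ofReal_mul hK1]
        congr 2
        rw [hK1def, hcdef, mul_pow, mul_pow]
        have h1 : (γ:ℝ) ≠ 0 := hγ0.ne'
        have h2 : (N:ℝ) ≠ 0 := hN0.ne'
        field_simp
        ring
    _ = _ := rfl
end
end

section
/- Let ρ > 0, r > 0, R > 0 and let g : ℝ → [0,∞) be measurable with g(x) ≤ exp(−r|x|^ρ + R) for all x ∈ ℝ. Set γ_n = min(1, (n+1)^{1/ρ − 1/2}). Then for every n ≥ 1 and every z = (z_1,…,z_n) ∈ ℂⁿ whose multiset of entries is invariant under complex conjugation (so that ã(z) ∈ ℝ^{n+1}), ∫_ℝ |a|^n ∏_{k=0}^n g(a·ã_k(z)) dℓ_ℝ(a) ≤ e^{(n+1)R} · γ_n^{−(n+1)} · ‖ã(z)‖_2^{−(n+1)} · ∫_ℝ |u|^n e^{−r|u|^ρ} dℓ_ℝ(u). -/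
open MeasureTheory Filter Polynomial
open scoped ENNReal NNReal

noncomputable section

/-- Subadditivity of `x ↦ x ^ p` for `0 < p ≤ 1` over finite sums (real version). -/
lemma rpow_sum_le_sum_rpow_real {ι : Type*} (s : Finset ι) (f : ι → ℝ)
    (hf : ∀ i, 0 ≤ f i) {p : ℝ} (hp : 0 < p) (hp1 : p ≤ 1) :
    (∑ i ∈ s, f i) ^ p ≤ ∑ i ∈ s, f i ^ p := by
  classical
  induction s using Finset.cons_induction with
  | empty => simp [Real.zero_rpow hp.ne']
  | cons a s ha ih =>
    rw [Finset.sum_cons, Finset.sum_cons]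
    have h1 : 0 ≤ f a := hf a
    have h2 : 0 ≤ ∑ i ∈ s, f i := Finset.sum_nonneg fun i _ => hf i
    have hadd : (f a + ∑ i ∈ s, f i) ^ p ≤ f a ^ p + (∑ i ∈ s, f i) ^ p := by
      have := NNReal.rpow_add_le_add_rpow (f a).toNNReal (∑ i ∈ s, f i).toNNReal hp.le hp1
      calc (f a + ∑ i ∈ s, f i) ^ p
          = (((f a).toNNReal + (∑ i ∈ s, f i).toNNReal : ℝ≥0) : ℝ) ^ p := by
            rw [NNReal.coe_add, Real.coe_toNNReal _ h1, Real.coe_toNNReal _ h2]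
        _ = ((((f a).toNNReal + (∑ i ∈ s, f i).toNNReal) ^ p : ℝ≥0) : ℝ) := by
            rw [NNReal.coe_rpow]
        _ ≤ (((f a).toNNReal ^ p + (∑ i ∈ s, f i).toNNReal ^ p : ℝ≥0) : ℝ) := by
            exact_mod_cast this
        _ = f a ^ p + (∑ i ∈ s, f i) ^ p := by
            rw [NNReal.coe_add, NNReal.coe_rpow, NNReal.coe_rpow,
              Real.coe_toNNReal _ h1, Real.coe_toNNReal _ h2]
    exact hadd.trans (by gcongr)

/-- The `ℓ^ρ`–`ℓ^2` comparison: `(γ_n ‖b‖₂)^ρ ≤ ∑ |b k|^ρ`. -/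
lemma key_norm (ρ : ℝ) (hρ : 0 < ρ) (n : ℕ) (b : Fin (n + 1) → ℝ) :
    (min 1 (((n : ℝ) + 1) ^ ((1 : ℝ) / ρ - 1 / 2)) * (∑ k, b k ^ 2) ^ ((1 : ℝ) / 2)) ^ ρ
      ≤ ∑ k, |b k| ^ ρ := by
  set γ := min 1 (((n : ℝ) + 1) ^ ((1 : ℝ) / ρ - 1 / 2)) with hγdef
  set S := ∑ k, b k ^ 2 with hSdef
  have hS0 : 0 ≤ S := Finset.sum_nonneg fun k _ => sq_nonneg _
  have hγ0 : 0 ≤ γ := le_min zero_le_one (Real.rpow_nonneg (by positivity) _)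
  have hterm : ∀ k : Fin (n + 1), (b k ^ 2 : ℝ) ^ (ρ / 2) = |b k| ^ ρ := by
    intro k
    rw [← sq_abs, ← Real.rpow_natCast |b k| 2, ← Real.rpow_mul (abs_nonneg _)]
    norm_num
    congr 1
    ring
  have hS12 : ((S ^ ((1 : ℝ) / 2)) : ℝ) ^ ρ = S ^ (ρ / 2) := by
    rw [← Real.rpow_mul hS0]; congr 1; ring
  rw [Real.mul_rpow hγ0 (Real.rpow_nonneg hS0 _), hS12]
  rcases le_total ρ 2 with h2 | h2
  · have hγρ : γ ^ ρ ≤ 1 := Real.rpow_le_one hγ0 (min_le_left _ _) hρ.le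
    have hsum : S ^ (ρ / 2) ≤ ∑ k, |b k| ^ ρ := by
      have h := rpow_sum_le_sum_rpow_real Finset.univ (fun k : Fin (n + 1) => b k ^ 2)
        (fun k => sq_nonneg _) (by linarith : (0:ℝ) < ρ / 2) (by linarith : ρ / 2 ≤ 1)
      calc S ^ (ρ / 2) ≤ ∑ k, (b k ^ 2 : ℝ) ^ (ρ / 2) := h
        _ = ∑ k, |b k| ^ ρ := Finset.sum_congr rfl fun k _ => hterm k
    calc γ ^ ρ * S ^ (ρ / 2) ≤ 1 * S ^ (ρ / 2) :=
          mul_le_mul_of_nonneg_right hγρ (Real.rpow_nonneg hS0 _)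
      _ = S ^ (ρ / 2) := one_mul _
      _ ≤ ∑ k, |b k| ^ ρ := hsum
  · set N : ℝ := (n : ℝ) + 1 with hN
    have hN0 : (0:ℝ) < N := by positivity
    have hγρ : γ ^ ρ ≤ N ^ (1 - ρ / 2) := by
      calc γ ^ ρ ≤ (N ^ ((1 : ℝ) / ρ - 1 / 2)) ^ ρ :=
            Real.rpow_le_rpow hγ0 (min_le_right _ _) hρ.le
        _ = N ^ (1 - ρ / 2) := by
            rw [← Real.rpow_mul hN0.le]; congr 1; field_simp
    have hJ := Real.rpow_arith_mean_le_arith_mean_rpow Finset.univ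
      (fun _ : Fin (n + 1) => 1 / N) (fun k => b k ^ 2)
      (fun i _ => by positivity)
      (by simp [Finset.card_univ]; field_simp; exact hN.symm)
      (fun i _ => sq_nonneg _) (by linarith : (1:ℝ) ≤ ρ / 2)
    have hL : (∑ k : Fin (n + 1), 1 / N * b k ^ 2) = S / N := by
      rw [← Finset.mul_sum, ← hSdef]; ring
    have hRr : (∑ k : Fin (n + 1), 1 / N * (b k ^ 2 : ℝ) ^ (ρ / 2))
        = (∑ k, |b k| ^ ρ) / N := by
      rw [← Finset.mul_sum, Finset.sum_congr rfl fun k _ => hterm k]; ring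
    rw [hL, hRr] at hJ
    calc γ ^ ρ * S ^ (ρ / 2) ≤ N ^ (1 - ρ / 2) * S ^ (ρ / 2) :=
          mul_le_mul_of_nonneg_right hγρ (Real.rpow_nonneg hS0 _)
      _ = N * (S / N) ^ (ρ / 2) := by
          rw [Real.div_rpow hS0 hN0.le, Real.rpow_sub hN0, Real.rpow_one]; ring
      _ ≤ N * ((∑ k, |b k| ^ ρ) / N) := mul_le_mul_of_nonneg_left hJ hN0.le
      _ = ∑ k, |b k| ^ ρ := by field_simp

/-- Upper bound on the (real-coefficients) density of the zeros in terms of the Euclidean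
norm `‖ã(z)‖₂`, with comparison factor `γ_n = min(1, (n+1)^{1/ρ − 1/2})`, for a root
configuration `z` whose multiset of entries is invariant under complex conjugation (so that
`ã(z)` has real entries). -/
theorem density_upper_bound_real (ρ r R : ℝ) (hρ : 0 < ρ) (hr : 0 < r) (hR : 0 < R)
    (g : ℝ → ℝ) (hg_meas : Measurable g) (hg_nonneg : ∀ x, 0 ≤ g x)
    (htail : ∀ x : ℝ, g x ≤ Real.exp (-r * |x| ^ ρ + R))
    (n : ℕ) (hn : 1 ≤ n) (z : Fin n → ℂ)
    (hconj : Multiset.map (fun w : ℂ => (starRingEnd ℂ) w) (↑(List.ofFn z) : Multiset ℂ)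
      = (↑(List.ofFn z) : Multiset ℂ)) :
    (∫⁻ a : ℝ, ENNReal.ofReal (|a| ^ n * ∏ k, g (a * (atil n z k).re)))
      ≤ ENNReal.ofReal (Real.exp ((n + 1 : ℝ) * R) *
          ((min 1 (((n : ℝ) + 1) ^ ((1 : ℝ) / ρ - 1 / 2))) ^ (n + 1))⁻¹ *
          (((∑ k, ‖atil n z k‖ ^ 2) ^ ((1 : ℝ) / 2)) ^ (n + 1))⁻¹) *
        ∫⁻ u : ℝ, ENNReal.ofReal (|u| ^ n * Real.exp (-r * |u| ^ ρ)) := by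
  classical
  set P : Polynomial ℂ := ∏ i, (X - C (z i)) with hPdef
  -- coefficients are real
  have hprodM : ∀ w : Fin n → ℂ,
      (∏ i, (X - C (w i))) = (Multiset.map (fun ζ : ℂ => X - C ζ) ↑(List.ofFn w)).prod := by
    intro w
    rw [Multiset.map_coe, List.map_ofFn, Multiset.prod_coe, List.prod_ofFn]
    rfl
  have hPconj : P.map (starRingEnd ℂ) = P := by
    calc P.map (starRingEnd ℂ) = ∏ i, (X - C ((starRingEnd ℂ) (z i))) := by
          simp [hPdef, Polynomial.map_prod]
      _ = (Multiset.map (fun ζ : ℂ => X - C ζ)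
            (Multiset.map (fun w : ℂ => (starRingEnd ℂ) w) ↑(List.ofFn z))).prod := by
          rw [hprodM (fun i => (starRingEnd ℂ) (z i))]
          simp [Multiset.map_coe, List.map_ofFn, Function.comp_def]
      _ = (Multiset.map (fun ζ : ℂ => X - C ζ) ↑(List.ofFn z)).prod := by rw [hconj]
      _ = P := (hprodM z).symm
  have hre : ∀ k : Fin (n + 1), ((atil n z k).re : ℂ) = atil n z k := by
    intro k
    have : (starRingEnd ℂ) (P.coeff (k : ℕ)) = P.coeff (k : ℕ) := by
      rw [← Polynomial.coeff_map, hPconj]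
    exact Complex.conj_eq_iff_re.mp this
  set b : Fin (n + 1) → ℝ := fun k => (atil n z k).re with hbdef
  have habs : ∀ k, ‖atil n z k‖ = |b k| := by
    intro k
    rw [← hre k]
    exact (Complex.norm_real _).trans (Real.norm_eq_abs _)
  -- leading coefficient
  have hmonic : P.Monic := monic_prod_of_monic _ _ fun i _ => monic_X_sub_C (z i)
  have hdeg : P.natDegree = n := by
    rw [hPdef, natDegree_prod_of_monic _ _ fun i _ => monic_X_sub_C (z i)]
    simp [natDegree_X_sub_C]
  have hlast : b (Fin.last n) = 1 := by
    have h1 : atil n z (Fin.last n) = 1 := by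
      show P.coeff ((Fin.last n : Fin (n + 1)) : ℕ) = 1
      rw [Fin.val_last, ← hdeg]
      exact hmonic.coeff_natDegree
    simp [hbdef, h1]
  set S : ℝ := ∑ k, b k ^ 2 with hSdef
  have hS1 : (1:ℝ) ≤ S := by
    have := Finset.single_le_sum (f := fun k : Fin (n+1) => b k ^ 2)
      (fun i _ => sq_nonneg _) (Finset.mem_univ (Fin.last n))
    simpa [hlast] using this
  have hS0 : (0:ℝ) < S := lt_of_lt_of_le one_pos hS1
  set γ : ℝ := min 1 (((n : ℝ) + 1) ^ ((1 : ℝ) / ρ - 1 / 2)) with hγdef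
  have hγpos : 0 < γ := lt_min one_pos (Real.rpow_pos_of_pos (by positivity) _)
  set S12 : ℝ := S ^ ((1:ℝ)/2) with hS12def
  have hS12pos : 0 < S12 := Real.rpow_pos_of_pos hS0 _
  set c : ℝ := γ * S12 with hcdef
  have hc : 0 < c := mul_pos hγpos hS12pos
  set E : ℝ := Real.exp ((n + 1 : ℝ) * R) with hEdef
  have hE0 : 0 ≤ E := Real.exp_pos _ |>.le
  set K : ℝ := E * (c ^ n)⁻¹ with hKdef
  have hK0 : 0 ≤ K := by positivity
  set F : ℝ → ℝ := fun u => |u| ^ n * Real.exp (-r * |u| ^ ρ) with hFdef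
  -- pointwise bound
  have hpoint : ∀ a : ℝ, |a| ^ n * ∏ k, g (a * b k) ≤ K * F (c * a) := by
    intro a
    have hcρ : c ^ ρ ≤ ∑ k, |b k| ^ ρ := key_norm ρ hρ n b
    have hsum_ge : |c * a| ^ ρ ≤ ∑ k : Fin (n+1), |a * b k| ^ ρ := by
      have h1 : |c * a| ^ ρ = c ^ ρ * |a| ^ ρ := by
        rw [abs_mul, abs_of_nonneg hc.le, Real.mul_rpow hc.le (abs_nonneg _)]
      have h2 : (∑ k : Fin (n+1), |a * b k| ^ ρ) = |a| ^ ρ * ∑ k, |b k| ^ ρ := by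
        rw [Finset.mul_sum]
        refine Finset.sum_congr rfl fun k _ => ?_
        rw [abs_mul, Real.mul_rpow (abs_nonneg _) (abs_nonneg _)]
      rw [h1, h2, mul_comm (c ^ ρ) (|a| ^ ρ)]
      exact mul_le_mul_of_nonneg_left hcρ (Real.rpow_nonneg (abs_nonneg _) _)
    have hprod : (∏ k, g (a * b k)) ≤ E * Real.exp (-r * |c * a| ^ ρ) := by
      calc (∏ k, g (a * b k)) ≤ ∏ k : Fin (n+1), Real.exp (-r * |a * b k| ^ ρ + R) :=
            Finset.prod_le_prod (fun k _ => hg_nonneg _) (fun k _ => htail _)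
        _ = Real.exp (∑ k : Fin (n+1), (-r * |a * b k| ^ ρ + R)) := (Real.exp_sum _ _).symm
        _ ≤ Real.exp ((n + 1 : ℝ) * R + -r * |c * a| ^ ρ) := by
            apply Real.exp_le_exp.mpr
            have hneg : ∑ k : Fin (n+1), -r * |a * b k| ^ ρ ≤ -r * |c * a| ^ ρ := by
              rw [← Finset.mul_sum, neg_mul, neg_mul, neg_le_neg_iff]
              exact mul_le_mul_of_nonneg_left hsum_ge hr.le
            rw [Finset.sum_add_distrib, Finset.sum_const, Finset.card_univ, Fintype.card_fin,
              nsmul_eq_mul]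
            push_cast
            linarith [hneg]
        _ = E * Real.exp (-r * |c * a| ^ ρ) := by
            rw [hEdef, ← Real.exp_add]
    have habsn : |a| ^ n = (c ^ n)⁻¹ * |c * a| ^ n := by
      have hca : |c * a| ^ n = c ^ n * |a| ^ n := by
        rw [abs_mul, abs_of_nonneg hc.le]; ring
      rw [hca, ← mul_assoc, inv_mul_cancel₀ (pow_ne_zero n hc.ne'), one_mul]
    calc |a| ^ n * ∏ k, g (a * b k)
        ≤ |a| ^ n * (E * Real.exp (-r * |c * a| ^ ρ)) := by
          apply mul_le_mul_of_nonneg_left hprod (by positivity)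
      _ = K * F (c * a) := by
          rw [habsn, hKdef, hFdef]
          ring
  -- measurability of F in ENNReal form
  set Ff : ℝ → ℝ≥0∞ := fun u => ENNReal.ofReal (F u) with hFfdef
  have hFcont : Continuous F := by
    apply Continuous.mul
    · exact continuous_abs.pow n
    · exact Real.continuous_exp.comp
        (continuous_const.mul ((Real.continuous_rpow_const hρ.le).comp continuous_abs))
  have hFf : Measurable Ff := Measurable.ennreal_ofReal hFcont.measurable
  -- change of variables
  have hmap : (∫⁻ a : ℝ, Ff (c * a)) = ENNReal.ofReal |c⁻¹| * ∫⁻ u : ℝ, Ff u := by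
    rw [← lintegral_map hFf (measurable_const_mul c), Real.map_volume_mul_left hc.ne',
      lintegral_smul_measure, smul_eq_mul]
  -- sum rewrite
  have hsumC : (∑ k, ‖atil n z k‖ ^ 2) = S := by
    refine Finset.sum_congr rfl fun k _ => ?_
    rw [habs k, sq_abs]
  rw [hsumC]
  have hconst : E * ((γ ^ (n + 1))⁻¹) * ((S12 ^ (n + 1))⁻¹) = K * c⁻¹ := by
    rw [hKdef, hcdef]
    ring
  calc (∫⁻ a : ℝ, ENNReal.ofReal (|a| ^ n * ∏ k, g (a * (atil n z k).re)))
      ≤ ∫⁻ a : ℝ, ENNReal.ofReal (K * F (c * a)) := by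
        exact lintegral_mono fun a => ENNReal.ofReal_le_ofReal (hpoint a)
    _ = ENNReal.ofReal K * ∫⁻ a : ℝ, Ff (c * a) := by
        simp_rw [ENNReal.ofReal_mul hK0]
        rw [lintegral_const_mul' _ _ ENNReal.ofReal_ne_top]
    _ = ENNReal.ofReal K * (ENNReal.ofReal |c⁻¹| * ∫⁻ u : ℝ, Ff u) := by rw [hmap]
    _ = ENNReal.ofReal (K * c⁻¹) * ∫⁻ u : ℝ, Ff u := by
        rw [abs_of_nonneg (inv_nonneg.2 hc.le), ← mul_assoc, ← ENNReal.ofReal_mul hK0]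
    _ = ENNReal.ofReal (E * ((γ ^ (n + 1))⁻¹) * ((S12 ^ (n + 1))⁻¹)) * ∫⁻ u : ℝ, Ff u := by
        rw [hconst]
end
end
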